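/- Let (G, L) be a feasible list-coloring instance and v a vertex with |L(v)| > d(v) + 1, where d(v) is the degree of v. Let Δ be a set of vertices not containing v and σ a feasible partial coloring of Δ. Then for every color x ∈ L(v), the conditional probability that a uniformly random proper list-coloring c satisfies c(v) = x given c agrees with σ on Δ is at most 1/(|L(v)| - d(v)). -/

import Mathlib

def ProperColoring {V : Type*} (G : SimpleGraph V) {q : ℕ}
    (L : V → Finset (Fin q)) (c : V → Fin q) : Prop :=
  (∀ v, c v ∈ L v) ∧ ∀ u w, G.Adj u w → c u ≠ c w

theorem marginal_upper_bound {V : Type*} [Fintype V] {q : ℕ}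
    (G : SimpleGraph V) [DecidableRel G.Adj]
    (L : V → Finset (Fin q)) (v : V)
    (hdeg : G.degree v + 1 < (L v).card)
    (Δ : Set V) (hv : v ∉ Δ) (σ : V → Fin q)
    (hσ : ∃ c, ProperColoring G L c ∧ ∀ u ∈ Δ, c u = σ u) :
    ∀ x ∈ L v,
      (Nat.card {c : V → Fin q //
          ProperColoring G L c ∧ (∀ u ∈ Δ, c u = σ u) ∧ c v = x} : ℝ) /
        (Nat.card {c : V → Fin q //
          ProperColoring G L c ∧ ∀ u ∈ Δ, c u = σ u} : ℝ) ≤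
      1 / (((L v).card : ℝ) - (G.degree v : ℝ)) := by
  classical
  intro x hx
  set k : ℕ := (L v).card - G.degree v with hk
  have hk2 : 2 ≤ k := by omega
  set P : (V → Fin q) → Prop := fun c => ProperColoring G L c ∧ ∀ u ∈ Δ, c u = σ u with hP
  set S : Finset (V → Fin q) := Finset.univ.filter P with hS
  set Sx : Finset (V → Fin q) := Finset.univ.filter (fun c => P c ∧ c v = x) with hSx
  have hcard1 : Nat.card {c : V → Fin q //
      ProperColoring G L c ∧ (∀ u ∈ Δ, c u = σ u) ∧ c v = x} = Sx.card := by
    rw [Nat.card_eq_fintype_card, Fintype.card_subtype]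
    congr 1
    apply Finset.filter_congr
    intro c _
    simp [hP, and_assoc]
  have hcard2 : Nat.card {c : V → Fin q //
      ProperColoring G L c ∧ ∀ u ∈ Δ, c u = σ u} = S.card := by
    rw [Nat.card_eq_fintype_card, Fintype.card_subtype]
  -- S is nonempty
  obtain ⟨c₀, hc₀⟩ := hσ
  have hSpos : 0 < S.card :=
    Finset.card_pos.mpr ⟨c₀, Finset.mem_filter.mpr ⟨Finset.mem_univ _, hc₀⟩⟩
  -- fiber of c
  have key : Sx.card * k ≤ S.card := by
    set fib : (V → Fin q) → Finset (V → Fin q) :=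
      fun c => S.filter (fun d => Function.update d v x = Function.update c v x) with hfib
    have hfibsub : ∀ c, fib c ⊆ S := fun c => Finset.filter_subset _ _
    have hfibcard : ∀ c ∈ Sx, k ≤ (fib c).card := by
      intro c hc
      simp only [hSx, Finset.mem_filter] at hc
      obtain ⟨-, ⟨⟨hcL, hcadj⟩, hcΔ⟩, hcv⟩ := hc
      set avail : Finset (Fin q) := L v \ (G.neighborFinset v).image c with havail
      have h1 : k ≤ avail.card := by
        have := Finset.le_card_sdiff ((G.neighborFinset v).image c) (L v)
        have h2 : ((G.neighborFinset v).image c).card ≤ G.degree v :=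
          (Finset.card_image_le).trans_eq (G.card_neighborFinset_eq_degree v)
        exact hk ▸ le_trans (Nat.sub_le_sub_left h2 _) this
      refine h1.trans ?_
      apply Finset.card_le_card_of_injOn (fun y => Function.update c v y)
      · intro y hy
        simp only [Finset.mem_coe, havail, Finset.mem_sdiff, Finset.mem_image] at hy
        obtain ⟨hyL, hyim⟩ := hy
        simp only [Finset.mem_coe, hfib, Finset.mem_filter, hS, hP]
        refine ⟨⟨Finset.mem_univ _, ⟨⟨?_, ?_⟩, ?_⟩⟩, ?_⟩
        · intro u
          by_cases hu : u = v
          · subst hu; simpa using hyL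
          · simpa [Function.update_of_ne hu] using hcL u
        · intro u w huw
          by_cases hu : u = v
          · rw [hu, Function.update_self, Function.update_of_ne (hu ▸ huw).ne']
            intro h
            exact hyim ⟨w, (G.mem_neighborFinset v w).mpr (hu ▸ huw), h.symm⟩
          · by_cases hw : w = v
            · rw [Function.update_of_ne hu, hw, Function.update_self]
              intro hh
              exact hyim ⟨u, (G.mem_neighborFinset v u).mpr (hw ▸ huw).symm, hh⟩
            · rw [Function.update_of_ne hu, Function.update_of_ne hw]
              exact hcadj u w huw
        · intro u hu
          have hu' : u ≠ v := fun h => hv (h ▸ hu)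
          rw [Function.update_of_ne hu']
          exact hcΔ u hu
        · simp [Function.update_idem]
      · intro y _ y' _ h
        have := congrArg (fun f => f v) h
        simpa using this
    have hdisj : ∀ c ∈ Sx, ∀ c' ∈ Sx, c ≠ c' → Disjoint (fib c) (fib c') := by
      intro c hc c' hc' hne
      simp only [hSx, Finset.mem_filter] at hc hc'
      rw [Finset.disjoint_left]
      intro d hd hd'
      simp only [hfib, Finset.mem_filter] at hd hd'
      have h : Function.update c v x = Function.update c' v x := hd.2 ▸ hd'.2
      apply hne
      have e1 : Function.update c v x = c := by
        funext u; by_cases hu : u = v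
        · subst hu; simp [hc.2.2]
        · simp [Function.update_of_ne hu]
      have e2 : Function.update c' v x = c' := by
        funext u; by_cases hu : u = v
        · subst hu; simp [hc'.2.2]
        · simp [Function.update_of_ne hu]
      rw [← e1, ← e2, h]
    calc Sx.card * k = ∑ c ∈ Sx, k := by rw [Finset.sum_const, smul_eq_mul]
      _ ≤ ∑ c ∈ Sx, (fib c).card := Finset.sum_le_sum hfibcard
      _ = (Sx.biUnion fib).card := (Finset.card_biUnion hdisj).symm
      _ ≤ S.card := Finset.card_le_card (Finset.biUnion_subset.mpr fun c _ => hfibsub c)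
  rw [hcard1, hcard2]
  have hkreal : (((L v).card : ℝ) - (G.degree v : ℝ)) = (k : ℝ) := by
    rw [hk, Nat.cast_sub (le_of_lt (Nat.lt_of_succ_lt hdeg) : G.degree v ≤ (L v).card)]
  rw [hkreal, div_le_div_iff₀ (by exact_mod_cast hSpos) (by positivity)]
  calc (Sx.card : ℝ) * k = ((Sx.card * k : ℕ) : ℝ) := by norm_cast
    _ ≤ (S.card : ℝ) := by exact_mod_cast key
    _ = 1 * S.card := (one_mul _).symm
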